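/- Consider the weighted graph on vertex set V = {v_n : n ∈ ℕ} ∪ {v_∞} with edges v_∞v_n of weight 1 for all n ∈ ℕ and edges e_n = v_nv_{n+1} with c(e_0) = 2 and c(e_n) = c(e_{n-1}) + n + 1 for n > 0. This weighted graph is finitely separable (λ_c(u,v) < ∞ for all u ≠ v) but has no Gomory-Hu tree: there is no tree T on V such that for every u ≠ v ∈ V some edge e of T has the property that the vertex set X of one of the two components of T − e separates u and v and satisfies d_c(X) = λ_c(u,v). -/

import Mathlib

open Set Filter Topology ENNReal

noncomputable section

/-- The set of edges of `G` with exactly one endpoint in `X` (`out_G(X)`). -/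
def outEdges {V : Type*} (G : SimpleGraph V) (X : Set V) : Set (Sym2 V) :=
  {e | e ∈ G.edgeSet ∧ ∃ x y, e = s(x, y) ∧ x ∈ X ∧ y ∉ X}

/-- `d_c(X)`: the total weight of the edges leaving `X`, a value in `[0,∞]`. -/
def dCut {V : Type*} (G : SimpleGraph V) (c : Sym2 V → ℝ≥0∞) (X : Set V) : ℝ≥0∞ :=
  ∑' e : outEdges G X, c e

/-- `λ_c(u,v)`: the infimum of the values of `u-v` cuts. -/
def lamC {V : Type*} (G : SimpleGraph V) (c : Sym2 V → ℝ≥0∞) (u v : V) : ℝ≥0∞ :=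
  ⨅ (X : Set V) (_ : u ∈ X ∧ v ∉ X), dCut G c X

/-- The fundamental cut of the tree-edge `xy`: the vertex set of the component of `T - xy`
containing `x`. -/
def fundCut {V : Type*} (T : SimpleGraph V) (x y : V) : Set V :=
  {w | (T.deleteEdges {s(x, y)}).Reachable x w}

/-- The counterexample graph on `V = {vₙ : n ∈ ℕ} ∪ {v_∞}` (`some n` is `vₙ`, `none` is
`v_∞`): `v_∞` is joined to every `vₙ`, and `vₙ` is joined to `vₙ₊₁`. -/
def exGraph : SimpleGraph (Option ℕ) :=
  SimpleGraph.fromRel (fun x y =>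
    (∃ n : ℕ, x = none ∧ y = some n) ∨ (∃ n : ℕ, x = some n ∧ y = some (n + 1)))

namespace GomoryHuAux

/-- The interval cut `{v_0, …, v_n}`. -/
def I (n : ℕ) : Set (Option ℕ) := {x | ∃ k, k ≤ n ∧ x = some k}

lemma some_mem_I {k n : ℕ} : some k ∈ I n ↔ k ≤ n := by
  constructor
  · rintro ⟨j, hj, hx⟩
    cases hx
    exact hj
  · intro h
    exact ⟨k, h, rfl⟩

lemma none_not_I (n : ℕ) : (none : Option ℕ) ∉ I n := by
  rintro ⟨j, hj, hx⟩
  cases hx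

lemma adj_ns (k : ℕ) : exGraph.Adj none (some k) := by
  rw [exGraph, SimpleGraph.fromRel_adj]
  exact ⟨by simp, Or.inl (Or.inl ⟨k, rfl, rfl⟩)⟩

lemma adj_ss (k : ℕ) : exGraph.Adj (some k) (some (k + 1)) := by
  rw [exGraph, SimpleGraph.fromRel_adj]
  exact ⟨by simp, Or.inl (Or.inr ⟨k, rfl, rfl⟩)⟩

lemma adj_cases {x y : Option ℕ} (h : exGraph.Adj x y) :
    (∃ n, x = none ∧ y = some n) ∨ (∃ n, y = none ∧ x = some n) ∨
    (∃ n, x = some n ∧ y = some (n + 1)) ∨ (∃ n, y = some n ∧ x = some (n + 1)) := by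
  rw [exGraph, SimpleGraph.fromRel_adj] at h
  rcases h.2 with (⟨n, h1, h2⟩ | ⟨n, h1, h2⟩) | (⟨n, h1, h2⟩ | ⟨n, h1, h2⟩)
  · exact Or.inl ⟨n, h1, h2⟩
  · exact Or.inr (Or.inr (Or.inl ⟨n, h1, h2⟩))
  · exact Or.inr (Or.inl ⟨n, h1, h2⟩)
  · exact Or.inr (Or.inr (Or.inr ⟨n, h1, h2⟩))

lemma mem_outEdges {V : Type*} {G : SimpleGraph V} {X : Set V} {a b : V}
    (h : G.Adj a b) (ha : a ∈ X) (hb : b ∉ X) : s(a, b) ∈ outEdges G X :=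
  ⟨G.mem_edgeSet.mpr h, a, b, rfl, ha, hb⟩

lemma mem_outEdges' {V : Type*} {G : SimpleGraph V} {X : Set V} {a b : V}
    (h : G.Adj a b) (ha : a ∉ X) (hb : b ∈ X) : s(a, b) ∈ outEdges G X :=
  ⟨G.mem_edgeSet.mpr h, b, a, Sym2.eq_swap, hb, ha⟩

lemma outEdges_compl {V : Type*} (G : SimpleGraph V) (X : Set V) :
    outEdges G Xᶜ = outEdges G X := by
  have key : ∀ Y : Set V, outEdges G Y ⊆ outEdges G Yᶜ := by
    rintro Y e ⟨he, x, y, rfl, hx, hy⟩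
    exact ⟨he, y, x, Sym2.eq_swap, hy, fun h => h hx⟩
  refine subset_antisymm ?_ (key X)
  have h2 := key Xᶜ
  rwa [compl_compl] at h2

lemma dCut_compl {V : Type*} (G : SimpleGraph V) (c : Sym2 V → ℝ≥0∞) (X : Set V) :
    dCut G c Xᶜ = dCut G c X := by
  rw [dCut, dCut, outEdges_compl]

lemma sum_le_dCut {V : Type*} (G : SimpleGraph V) (c : Sym2 V → ℝ≥0∞) (X : Set V)
    (F : Finset (Sym2 V)) (hF : ↑F ⊆ outEdges G X) : (∑ e ∈ F, c e) ≤ dCut G c X := by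
  rw [dCut, ← Finset.tsum_subtype' F c]
  exact ENNReal.tsum_mono_subtype c hF

lemma dCut_eq {V : Type*} (G : SimpleGraph V) (c : Sym2 V → ℝ≥0∞) (X : Set V)
    {F : Finset (Sym2 V)} (h : outEdges G X = ↑F) : dCut G c X = ∑ e ∈ F, c e := by
  rw [dCut, h]
  exact Finset.tsum_subtype' F c

lemma inj_ns : Function.Injective (fun k : ℕ => s((none : Option ℕ), some k)) := by
  intro a b h
  simpa [Sym2.eq_iff] using h

section Weights

variable {c : Sym2 (Option ℕ) → ℝ≥0∞} {w : ℕ → ℝ≥0∞}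

lemma w_ne_top (hw0 : w 0 = 2) (hw : ∀ n : ℕ, w (n + 1) = w n + (n + 1) + 1) (n : ℕ) :
    w n ≠ ⊤ := by
  induction n with
  | zero => rw [hw0]; norm_num
  | succ n ih => rw [hw n]; simp [ENNReal.add_ne_top, ih]

lemma w_ge (hw0 : w 0 = 2) (hw : ∀ n : ℕ, w (n + 1) = w n + (n + 1) + 1) (n : ℕ) :
    (n : ℝ≥0∞) + 2 ≤ w n := by
  induction n with
  | zero => simp [hw0]
  | succ n ih =>
    rw [hw n]
    calc ((n + 1 : ℕ) : ℝ≥0∞) + 2 = ((n : ℝ≥0∞) + 2) + 1 := by push_cast; ring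
    _ ≤ w n + 1 := add_le_add_left ih 1
    _ ≤ w n + 1 + ((n : ℝ≥0∞) + 1) := le_self_add
    _ = w n + ((n : ℝ≥0∞) + 1) + 1 := by ring

lemma w_mono (hw : ∀ n : ℕ, w (n + 1) = w n + (n + 1) + 1) : Monotone w :=
  monotone_nat_of_le_succ fun n => by
    rw [hw n]
    exact le_trans (self_le_add_right _ _) (self_le_add_right _ _)

/-- The explicit finite edge set of the cut `I n`. -/
def cutF (n : ℕ) : Finset (Sym2 (Option ℕ)) :=
  ((Finset.range (n + 1)).image fun k => s((none : Option ℕ), some k)) ∪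
    {s(some n, some (n + 1))}

lemma outEdges_I (n : ℕ) : outEdges exGraph (I n) = ↑(cutF n) := by
  ext e
  constructor
  · rintro ⟨he, x, y, rfl, hx, hy⟩
    rw [SimpleGraph.mem_edgeSet] at he
    rcases adj_cases he with ⟨k, rfl, rfl⟩ | ⟨k, rfl, rfl⟩ | ⟨k, rfl, rfl⟩ | ⟨k, rfl, rfl⟩
    · exact absurd hx (none_not_I n)
    · have hk : k ≤ n := some_mem_I.mp hx
      refine Finset.mem_coe.mpr (Finset.mem_union_left _ ?_)
      exact Finset.mem_image.mpr ⟨k, Finset.mem_range.mpr (by omega), Sym2.eq_swap⟩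
    · have h1 : k ≤ n := some_mem_I.mp hx
      have h2 : ¬(k + 1 ≤ n) := fun h => hy (some_mem_I.mpr h)
      have hkn : k = n := by omega
      subst hkn
      exact Finset.mem_coe.mpr (Finset.mem_union_right _ (Finset.mem_singleton_self _))
    · have h1 : k + 1 ≤ n := some_mem_I.mp hx
      exact absurd (some_mem_I.mpr (by omega)) hy
  · intro hmem
    rcases Finset.mem_union.mp (Finset.mem_coe.mp hmem) with h | h
    · obtain ⟨k, hk, rfl⟩ := Finset.mem_image.mp h
      have hk' : k ≤ n := by
        have := Finset.mem_range.mp hk; omega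
      exact mem_outEdges' (adj_ns k) (none_not_I n) (some_mem_I.mpr hk')
    · rw [Finset.mem_singleton.mp h]
      exact mem_outEdges (adj_ss n) (some_mem_I.mpr le_rfl)
        (fun hc => by have := some_mem_I.mp hc; omega)

lemma sum_cutF (hc1 : ∀ n : ℕ, c s(none, some n) = 1)
    (hc2 : ∀ n : ℕ, c s(some n, some (n + 1)) = w n) (n : ℕ) :
    ∑ e ∈ cutF n, c e = (n : ℝ≥0∞) + 1 + w n := by
  have hdisj : Disjoint ((Finset.range (n + 1)).image fun k => s((none : Option ℕ), some k))
      ({s(some n, some (n + 1))} : Finset (Sym2 (Option ℕ))) := by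
    simp only [Finset.disjoint_left, Finset.mem_image, Finset.mem_singleton]
    rintro e ⟨k, hk, rfl⟩ h
    simp [Sym2.eq_iff] at h
  rw [cutF, Finset.sum_union hdisj, Finset.sum_singleton, hc2 n,
    Finset.sum_image (fun a _ b _ h => inj_ns h)]
  have h1 : ∀ k ∈ Finset.range (n + 1), c s((none : Option ℕ), some k) = 1 :=
    fun k _ => hc1 k
  rw [Finset.sum_congr rfl h1, Finset.sum_const, Finset.card_range, nsmul_eq_mul, mul_one]
  push_cast
  ring

lemma dCut_I (hc1 : ∀ n : ℕ, c s(none, some n) = 1)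
    (hc2 : ∀ n : ℕ, c s(some n, some (n + 1)) = w n) (n : ℕ) :
    dCut exGraph c (I n) = (n : ℝ≥0∞) + 1 + w n := by
  rw [dCut_eq exGraph c (I n) (outEdges_I n), sum_cutF hc1 hc2]

lemma key (hw0 : w 0 = 2) (hw : ∀ n : ℕ, w (n + 1) = w n + (n + 1) + 1)
    (hc1 : ∀ n : ℕ, c s(none, some n) = 1)
    (hc2 : ∀ n : ℕ, c s(some n, some (n + 1)) = w n)
    (n : ℕ) (X : Set (Option ℕ)) (hn : some n ∈ X) (hnone : (none : Option ℕ) ∉ X)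
    (hne : X ≠ I n) : (n : ℝ≥0∞) + 1 + w n < dCut exGraph c X := by
  classical
  have hfin_val : ((n : ℝ≥0∞) + 1 + w n) ≠ ⊤ := by
    simp [ENNReal.add_ne_top, w_ne_top hw0 hw n]
  by_cases hfin : {k : ℕ | some k ∈ X}.Finite
  · have hmemS : ∀ k : ℕ, k ∈ hfin.toFinset ↔ some k ∈ X := fun k => hfin.mem_toFinset
    have hnS : n ∈ hfin.toFinset := (hmemS n).mpr hn
    have hSne : hfin.toFinset.Nonempty := ⟨n, hnS⟩
    obtain ⟨b, hbmem, hble⟩ : ∃ b, b ∈ hfin.toFinset ∧ ∀ k ∈ hfin.toFinset, k ≤ b :=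
      ⟨hfin.toFinset.max' hSne, hfin.toFinset.max'_mem hSne,
        fun k hk => hfin.toFinset.le_max' k hk⟩
    have hbX : some b ∈ X := (hmemS b).mp hbmem
    have hnb : n ≤ b := hble n hnS
    have hb1 : some (b + 1) ∉ X := fun h => by
      have := hble (b + 1) ((hmemS _).mpr h); omega
    rcases eq_or_lt_of_le hnb with heq | hlt
    · -- b = n
      subst heq
      have hle : ∀ k, some k ∈ X → k ≤ n := fun k hk => hble k ((hmemS k).mpr hk)
      have hj : ∃ j, j < n ∧ some j ∉ X := by
        by_contra hcon
        push_neg at hcon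
        apply hne
        ext x
        cases x with
        | none => simp [hnone, none_not_I]
        | some k =>
          simp only [some_mem_I]
          constructor
          · exact hle k
          · intro hkn
            rcases eq_or_lt_of_le hkn with rfl | h
            · exact hn
            · exact hcon k h
      obtain ⟨j, hjn, hjX⟩ := hj
      have hDne : ((Finset.range n).filter fun k => some k ∉ X).Nonempty :=
        ⟨j, Finset.mem_filter.mpr ⟨Finset.mem_range.mpr hjn, hjX⟩⟩
      obtain ⟨m, hmmem, hmle⟩ : ∃ m, m ∈ ((Finset.range n).filter fun k => some k ∉ X) ∧
          ∀ k ∈ ((Finset.range n).filter fun k => some k ∉ X), k ≤ m :=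
        ⟨_, Finset.max'_mem _ hDne, fun k hk => Finset.le_max' _ k hk⟩
      have hmn : m < n := Finset.mem_range.mp (Finset.mem_filter.mp hmmem).1
      have hmX : some m ∉ X := (Finset.mem_filter.mp hmmem).2
      have hIoc : ∀ k, m < k → k ≤ n → some k ∈ X := by
        intro k h1 h2
        by_contra hk
        rcases eq_or_lt_of_le h2 with rfl | h3
        · exact hk hn
        · have := hmle k (Finset.mem_filter.mpr ⟨Finset.mem_range.mpr h3, hk⟩); omega
      have hm1 : some (m + 1) ∈ X := hIoc (m + 1) (by omega) (by omega)
      have hFsub : ↑(((Finset.Ioc m n).image fun k => s((none : Option ℕ), some k)) ∪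
          {s(some m, some (m + 1)), s(some n, some (n + 1))}) ⊆ outEdges exGraph X := by
        intro e he
        rcases Finset.mem_union.mp (Finset.mem_coe.mp he) with h | h
        · obtain ⟨k, hk, rfl⟩ := Finset.mem_image.mp h
          have hk' := Finset.mem_Ioc.mp hk
          exact mem_outEdges' (adj_ns k) hnone (hIoc k hk'.1 hk'.2)
        · rcases Finset.mem_insert.mp h with rfl | h
          · exact mem_outEdges' (adj_ss m) hmX hm1
          · rw [Finset.mem_singleton.mp h]
            exact mem_outEdges (adj_ss n) hn hb1
      have hdisj : Disjoint ((Finset.Ioc m n).image fun k => s((none : Option ℕ), some k))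
          ({s(some m, some (m + 1)), s(some n, some (n + 1))} : Finset (Sym2 (Option ℕ))) := by
        simp only [Finset.disjoint_left, Finset.mem_image, Finset.mem_insert,
          Finset.mem_singleton]
        rintro e ⟨k, hk, rfl⟩ (h | h) <;> simp [Sym2.eq_iff] at h
      have hpair : s(some m, some (m + 1)) ≠ s(some n, some (n + 1)) := by
        intro h
        rcases Sym2.eq_iff.mp h with ⟨h1, h2⟩ | ⟨h1, h2⟩ <;>
          simp only [Option.some.injEq] at h1 h2 <;> omega
      have hsum : ∑ e ∈ (((Finset.Ioc m n).image fun k => s((none : Option ℕ), some k)) ∪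
          {s(some m, some (m + 1)), s(some n, some (n + 1))}), c e
          = ((n - m : ℕ) : ℝ≥0∞) + (w m + w n) := by
        rw [Finset.sum_union hdisj, Finset.sum_image (fun a _ b _ h => inj_ns h),
          Finset.sum_pair hpair, hc2 m, hc2 n]
        have h1 : ∀ k ∈ Finset.Ioc m n, c s((none : Option ℕ), some k) = 1 :=
          fun k _ => hc1 k
        rw [Finset.sum_congr rfl h1, Finset.sum_const, Nat.card_Ioc, nsmul_eq_mul, mul_one]
      have hnm : (n - m) + m = n := Nat.sub_add_cancel hmn.le
      calc (n : ℝ≥0∞) + 1 + w n < (n : ℝ≥0∞) + 2 + w n := by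
            apply ENNReal.add_lt_add_right (w_ne_top hw0 hw n)
            have h1 : (n : ℝ≥0∞) + 1 < ((n : ℝ≥0∞) + 1) + 1 :=
              ENNReal.lt_add_right (by simp [ENNReal.add_ne_top]) one_ne_zero
            calc (n : ℝ≥0∞) + 1 < ((n : ℝ≥0∞) + 1) + 1 := h1
            _ = (n : ℝ≥0∞) + 2 := by ring
      _ = ((n - m : ℕ) : ℝ≥0∞) + ((m : ℝ≥0∞) + 2) + w n := by
            rw [← add_assoc, ← Nat.cast_add, hnm]
      _ ≤ ((n - m : ℕ) : ℝ≥0∞) + w m + w n := by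
            gcongr
            exact w_ge hw0 hw m
      _ = ((n - m : ℕ) : ℝ≥0∞) + (w m + w n) := by ring
      _ = ∑ e ∈ (((Finset.Ioc m n).image fun k => s((none : Option ℕ), some k)) ∪
            {s(some m, some (m + 1)), s(some n, some (n + 1))}), c e := hsum.symm
      _ ≤ dCut exGraph c X := sum_le_dCut _ _ _ _ hFsub
    · -- n < b
      have hpair : s((none : Option ℕ), some n) ≠ s(some b, some (b + 1)) := by
        intro h
        rcases Sym2.eq_iff.mp h with ⟨h1, h2⟩ | ⟨h1, h2⟩ <;> cases h1
      have hFsub : ↑({s((none : Option ℕ), some n), s(some b, some (b + 1))} :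
          Finset (Sym2 (Option ℕ))) ⊆ outEdges exGraph X := by
        intro e he
        rcases Finset.mem_insert.mp (Finset.mem_coe.mp he) with rfl | h
        · exact mem_outEdges' (adj_ns n) hnone hn
        · rw [Finset.mem_singleton.mp h]
          exact mem_outEdges (adj_ss b) hbX hb1
      have hsum : ∑ e ∈ ({s((none : Option ℕ), some n), s(some b, some (b + 1))} :
          Finset (Sym2 (Option ℕ))), c e = 1 + w b := by
        rw [Finset.sum_pair hpair, hc1 n, hc2 b]
      have hwb : w n + ((n : ℝ≥0∞) + 1) + 1 ≤ w b := by
        rw [← hw n]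
        exact w_mono hw hlt
      calc (n : ℝ≥0∞) + 1 + w n < (n : ℝ≥0∞) + 1 + w n + 2 :=
            ENNReal.lt_add_right hfin_val two_ne_zero
      _ = 1 + (w n + ((n : ℝ≥0∞) + 1) + 1) := by ring
      _ ≤ 1 + w b := add_le_add_right hwb 1
      _ = ∑ e ∈ ({s((none : Option ℕ), some n), s(some b, some (b + 1))} :
            Finset (Sym2 (Option ℕ))), c e := hsum.symm
      _ ≤ dCut exGraph c X := sum_le_dCut _ _ _ _ hFsub
  · -- infinitely many vertices in X
    have hinf : {k : ℕ | some k ∈ X}.Infinite := hfin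
    obtain ⟨N, hN⟩ := ENNReal.exists_nat_gt hfin_val
    obtain ⟨F', hF'sub, hF'card⟩ := hinf.exists_subset_card_eq N
    have hFsub : ↑(F'.image fun k => s((none : Option ℕ), some k)) ⊆ outEdges exGraph X := by
      intro e he
      obtain ⟨k, hk, rfl⟩ := Finset.mem_image.mp (Finset.mem_coe.mp he)
      exact mem_outEdges' (adj_ns k) hnone (hF'sub hk)
    have hsum : ∑ e ∈ (F'.image fun k => s((none : Option ℕ), some k)), c e = N := by
      rw [Finset.sum_image (fun a _ b _ h => inj_ns h)]
      have h1 : ∀ k ∈ F', c s((none : Option ℕ), some k) = 1 := fun k _ => hc1 k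
      rw [Finset.sum_congr rfl h1, Finset.sum_const, hF'card, nsmul_eq_mul, mul_one]
    calc (n : ℝ≥0∞) + 1 + w n < N := hN
    _ = ∑ e ∈ (F'.image fun k => s((none : Option ℕ), some k)), c e := hsum.symm
    _ ≤ dCut exGraph c X := sum_le_dCut _ _ _ _ hFsub

lemma lower (hw0 : w 0 = 2) (hw : ∀ n : ℕ, w (n + 1) = w n + (n + 1) + 1)
    (hc1 : ∀ n : ℕ, c s(none, some n) = 1)
    (hc2 : ∀ n : ℕ, c s(some n, some (n + 1)) = w n)
    (n : ℕ) (X : Set (Option ℕ)) (hn : some n ∈ X) (hnone : (none : Option ℕ) ∉ X) :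
    (n : ℝ≥0∞) + 1 + w n ≤ dCut exGraph c X := by
  by_cases h : X = I n
  · rw [h, dCut_I hc1 hc2 n]
  · exact (key hw0 hw hc1 hc2 n X hn hnone h).le

lemma lam_val (hw0 : w 0 = 2) (hw : ∀ n : ℕ, w (n + 1) = w n + (n + 1) + 1)
    (hc1 : ∀ n : ℕ, c s(none, some n) = 1)
    (hc2 : ∀ n : ℕ, c s(some n, some (n + 1)) = w n) (n : ℕ) :
    lamC exGraph c none (some n) = (n : ℝ≥0∞) + 1 + w n := by
  apply le_antisymm
  · have h1 : lamC exGraph c none (some n) ≤ dCut exGraph c (I n)ᶜ := by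
      simp only [lamC]
      exact iInf₂_le (I n)ᶜ ⟨none_not_I n, fun h => h (some_mem_I.mpr le_rfl)⟩
    rwa [dCut_compl, dCut_I hc1 hc2] at h1
  · simp only [lamC]
    refine le_iInf fun X => le_iInf fun hX => ?_
    rw [← dCut_compl]
    exact lower hw0 hw hc1 hc2 n Xᶜ hX.2 (fun h => h hX.1)

lemma cut_id (hw0 : w 0 = 2) (hw : ∀ n : ℕ, w (n + 1) = w n + (n + 1) + 1)
    (hc1 : ∀ n : ℕ, c s(none, some n) = 1)
    (hc2 : ∀ n : ℕ, c s(some n, some (n + 1)) = w n)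
    (n : ℕ) (C : Set (Option ℕ))
    (hval : dCut exGraph c C = (n : ℝ≥0∞) + 1 + w n)
    (hsep : ((none : Option ℕ) ∈ C ∧ some n ∉ C) ∨ (some n ∈ C ∧ (none : Option ℕ) ∉ C)) :
    C = I n ∨ C = (I n)ᶜ := by
  rcases hsep with ⟨h1, h2⟩ | ⟨h1, h2⟩
  · right
    have hC : Cᶜ = I n := by
      by_contra hcc
      have := key hw0 hw hc1 hc2 n Cᶜ h2 (fun h => h h1) hcc
      rw [dCut_compl, hval] at this
      exact lt_irrefl _ this
    rw [← hC, compl_compl]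
  · left
    by_contra hcc
    have := key hw0 hw hc1 hc2 n C h1 h2 hcc
    rw [hval] at this
    exact lt_irrefl _ this

end Weights

section Tree

variable {V : Type*} {T : SimpleGraph V}

lemma walk_rec (x y : V) {a b : V} (p : T.Walk a b) :
    (T.deleteEdges {s(x, y)}).Reachable a b ∨
    ((T.deleteEdges {s(x, y)}).Reachable a x ∧ (T.deleteEdges {s(x, y)}).Reachable y b) ∨
    ((T.deleteEdges {s(x, y)}).Reachable a y ∧ (T.deleteEdges {s(x, y)}).Reachable x b) := by
  induction p with
  | nil => exact Or.inl (SimpleGraph.Reachable.refl _)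
  | @cons u v z h p ih =>
    by_cases he : s(u, v) = s(x, y)
    · rcases Sym2.eq_iff.mp he with ⟨rfl, rfl⟩ | ⟨rfl, rfl⟩
      · rcases ih with h1 | ⟨h1, h2⟩ | ⟨h1, h2⟩
        · exact Or.inr (Or.inl ⟨SimpleGraph.Reachable.refl _, h1⟩)
        · exact Or.inl (h1.symm.trans h2)
        · exact Or.inl h2
      · rcases ih with h1 | ⟨h1, h2⟩ | ⟨h1, h2⟩
        · exact Or.inr (Or.inr ⟨SimpleGraph.Reachable.refl _, h1⟩)
        · exact Or.inl h2
        · exact Or.inl (h1.symm.trans h2)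
    · have ha : (T.deleteEdges {s(x, y)}).Adj u v := by
        rw [SimpleGraph.deleteEdges_adj]
        exact ⟨h, by simpa using he⟩
      rcases ih with h1 | ⟨h1, h2⟩ | ⟨h1, h2⟩
      · exact Or.inl (ha.reachable.trans h1)
      · exact Or.inr (Or.inl ⟨ha.reachable.trans h1, h2⟩)
      · exact Or.inr (Or.inr ⟨ha.reachable.trans h1, h2⟩)

lemma fundCut_total (hc : T.Preconnected) (x y v : V) :
    v ∈ fundCut T x y ∨ v ∈ fundCut T y x := by
  obtain ⟨p⟩ := hc x v
  rcases walk_rec x y p with h | ⟨_, h⟩ | ⟨_, h⟩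
  · exact Or.inl h
  · right
    show (T.deleteEdges {s(y, x)}).Reachable y v
    have hs : s(y, x) = s(x, y) := Sym2.eq_swap
    rw [hs]
    exact h
  · exact Or.inl h

lemma not_mem_fundCut (hT : T.IsTree) {x y : V} (h : T.Adj x y) : y ∉ fundCut T x y := by
  have hb := SimpleGraph.isAcyclic_iff_forall_adj_isBridge.mp hT.2 h
  rw [SimpleGraph.isBridge_iff] at hb
  intro hy
  exact hb hy

lemma mem_fundCut_self (x y : V) : x ∈ fundCut T x y :=
  SimpleGraph.Reachable.refl x

lemma fundCut_compl_eq (hT : T.IsTree) {x y : V} (h : T.Adj x y) :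
    fundCut T y x = (fundCut T x y)ᶜ := by
  ext v
  simp only [Set.mem_compl_iff]
  constructor
  · intro hv hv'
    apply not_mem_fundCut hT h
    have hs : s(y, x) = s(x, y) := Sym2.eq_swap
    have hv2 : (T.deleteEdges {s(y, x)}).Reachable y v := hv
    rw [hs] at hv2
    exact hv'.trans hv2.symm
  · intro hv
    rcases fundCut_total hT.isConnected.preconnected x y v with h1 | h2
    · exact absurd h1 hv
    · exact h2

end Tree

end GomoryHuAux

open GomoryHuAux

/-- The counterexample graph (with `c(v_∞vₙ) = 1`, `c(e₀) = 2`,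
`c(eₙ₊₁) = c(eₙ) + (n+1) + 1` where `eₙ = vₙvₙ₊₁`) is finitely separable but admits no
Gomory–Hu tree. -/
theorem exGraph_no_gomory_hu_tree (c : Sym2 (Option ℕ) → ℝ≥0∞) (w : ℕ → ℝ≥0∞)
    (hw0 : w 0 = 2) (hw : ∀ n : ℕ, w (n + 1) = w n + (n + 1) + 1)
    (hc1 : ∀ n : ℕ, c s(none, some n) = 1)
    (hc2 : ∀ n : ℕ, c s(some n, some (n + 1)) = w n) :
    (∀ u v : Option ℕ, u ≠ v → lamC exGraph c u v < ⊤) ∧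
    ¬ ∃ T : SimpleGraph (Option ℕ), T.IsTree ∧
        ∀ u v : Option ℕ, u ≠ v → ∃ x y : Option ℕ, T.Adj x y ∧
          ((u ∈ fundCut T x y ∧ v ∉ fundCut T x y) ∨
            (v ∈ fundCut T x y ∧ u ∉ fundCut T x y)) ∧
          dCut exGraph c (fundCut T x y) = lamC exGraph c u v := by
  have hItop : ∀ n : ℕ, dCut exGraph c (I n) < ⊤ := by
    intro n
    rw [dCut_I hc1 hc2]
    exact lt_top_iff_ne_top.mpr (by simp [ENNReal.add_ne_top, w_ne_top hw0 hw n])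
  constructor
  · intro u v huv
    cases u with
    | none =>
      cases v with
      | none => exact absurd rfl huv
      | some n =>
        refine lt_of_le_of_lt ?_ (by rw [dCut_compl] ; exact hItop n :
          dCut exGraph c (I n)ᶜ < ⊤)
        simp only [lamC]
        exact iInf₂_le (I n)ᶜ ⟨none_not_I n, fun h => h (some_mem_I.mpr le_rfl)⟩
    | some m =>
      cases v with
      | none =>
        refine lt_of_le_of_lt ?_ (hItop m)
        simp only [lamC]
        exact iInf₂_le (I m) ⟨some_mem_I.mpr le_rfl, none_not_I m⟩
      | some n =>
        have hmn : m ≠ n := by simpa using huv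
        rcases lt_or_gt_of_ne hmn with h | h
        · refine lt_of_le_of_lt ?_ (hItop m)
          simp only [lamC]
          exact iInf₂_le (I m) ⟨some_mem_I.mpr le_rfl,
            fun hc => by have := some_mem_I.mp hc; omega⟩
        · refine lt_of_le_of_lt ?_ (by rw [dCut_compl] ; exact hItop n :
            dCut exGraph c (I n)ᶜ < ⊤)
          simp only [lamC]
          exact iInf₂_le (I n)ᶜ ⟨fun hc => by have := some_mem_I.mp hc; omega,
            fun h => h (some_mem_I.mpr le_rfl)⟩
  · rintro ⟨T, hT, hGH⟩
    obtain ⟨k, hk⟩ : ∃ k, T.Adj none (some k) := by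
      obtain ⟨p⟩ := hT.isConnected.preconnected none (some 0)
      cases p with
      | cons h q =>
        rename_i z
        cases z with
        | none => exact absurd rfl h.ne
        | some k => exact ⟨k, h⟩
    have main : ∀ m : ℕ, ∃ a b : Option ℕ, T.Adj a b ∧ fundCut T a b = I m := by
      intro m
      obtain ⟨x, y, hadj, hsep, hval⟩ := hGH none (some m) (by simp)
      rw [lam_val hw0 hw hc1 hc2] at hval
      rcases cut_id hw0 hw hc1 hc2 m _ hval hsep with hC | hC
      · exact ⟨x, y, hadj, hC⟩
      · refine ⟨y, x, hadj.symm, ?_⟩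
        rw [fundCut_compl_eq hT hadj, hC, compl_compl]
    have uniq : ∀ (m : ℕ) (a b : Option ℕ), T.Adj a b → fundCut T a b = I m →
        ∀ u v : Option ℕ, T.Adj u v → u ∈ I m → v ∉ I m → s(u, v) = s(a, b) := by
      intro m a b hab hcut u v huv hu hv
      by_contra hne
      have hadj' : (T.deleteEdges {s(a, b)}).Adj u v := by
        rw [SimpleGraph.deleteEdges_adj]
        exact ⟨huv, by simpa using hne⟩
      have hru : (T.deleteEdges {s(a, b)}).Reachable a u := by
        rw [← hcut] at hu
        exact hu
      have hmem : v ∈ fundCut T a b := hru.trans hadj'.reachable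
      rw [hcut] at hmem
      exact hv hmem
    obtain ⟨a, b, hab, hcut⟩ := main k
    obtain ⟨a', b', hab', hcut'⟩ := main (k + 1)
    have h1 : s(some k, none) = s(a, b) :=
      uniq k a b hab hcut (some k) none hk.symm (some_mem_I.mpr le_rfl) (none_not_I k)
    have h2 : s(some k, none) = s(a', b') :=
      uniq (k + 1) a' b' hab' hcut' (some k) none hk.symm (some_mem_I.mpr (by omega))
        (none_not_I (k + 1))
    have haI : a ∈ I k := hcut ▸ mem_fundCut_self a b
    have ha'I : a' ∈ I (k + 1) := hcut' ▸ mem_fundCut_self a' b'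
    have hae : a = some k ∧ b = none := by
      rcases Sym2.eq_iff.mp h1 with ⟨hA, hB⟩ | ⟨hA, hB⟩
      · exact ⟨hA.symm, hB.symm⟩
      · rw [← hB] at haI
        exact absurd haI (none_not_I k)
    have hae' : a' = some k ∧ b' = none := by
      rcases Sym2.eq_iff.mp h2 with ⟨hA, hB⟩ | ⟨hA, hB⟩
      · exact ⟨hA.symm, hB.symm⟩
      · rw [← hB] at ha'I
        exact absurd ha'I (none_not_I (k + 1))
    rw [hae.1, hae.2] at hcut
    rw [hae'.1, hae'.2] at hcut'
    have hIeq : I k = I (k + 1) := hcut.symm.trans hcut'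
    have hx : some (k + 1) ∈ I k := by
      rw [hIeq]
      exact some_mem_I.mpr le_rfl
    have := some_mem_I.mp hx
    omega
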